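/- The function f(z) = [(1 - αz - βz³)² + 1] · e^{-z}/(1+e^{-z})² / C(α,β), where C(α,β) = (210 + 35π²α² + 98π⁴αβ + 155π⁶β²)/105, integrates to 1 over the real line for all real α and β. -/

import Mathlib

open Real MeasureTheory Filter

noncomputable def C (α β : ℝ) : ℝ :=
  (210 + 35 * π ^ 2 * α ^ 2 + 98 * π ^ 4 * α * β + 155 * π ^ 6 * β ^ 2) / 105

noncomputable def g (z : ℝ) : ℝ := Real.exp (-z) / (1 + Real.exp (-z)) ^ 2

noncomputable def f (z α β : ℝ) : ℝ := ((1 - α * z - β * z ^ 3) ^ 2 + 1) / C α β * g z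

open Set Topology

lemma g_neg (z : ℝ) : g (-z) = g z := by
  unfold g
  rw [neg_neg]
  have h := (exp_pos z).ne'
  have h2 := (exp_pos (-z)).ne'
  rw [exp_neg]
  field_simp
  ring

lemma g_nonneg (z : ℝ) : 0 ≤ g z := by
  unfold g; positivity

lemma g_cont : Continuous g := by
  unfold g
  apply (Real.continuous_exp.comp continuous_neg).div
  · fun_prop
  · intro z; positivity

lemma g_le_exp (z : ℝ) : g z ≤ Real.exp (-z) := by
  unfold g
  rw [div_le_iff₀ (by positivity)]
  nlinarith [exp_pos (-z), sq_nonneg (exp (-z))]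

lemma intB (k : ℕ) : IntegrableOn (fun t : ℝ ↦ t ^ k * Real.exp (-t)) (Ioi 0) := by
  have h := Real.GammaIntegral_convergent (s := (k : ℝ) + 1) (by positivity)
  refine h.congr_fun (fun t ht ↦ ?_) measurableSet_Ioi
  rw [add_sub_cancel_right]
  beta_reduce
  rw [Real.rpow_natCast]
  ring

lemma intOn_Ioi (k : ℕ) : IntegrableOn (fun t : ℝ ↦ t ^ k * g t) (Ioi 0) := by
  refine (intB k).mono' (((continuous_pow k).mul g_cont).aestronglyMeasurable) ?_
  refine (ae_restrict_iff' measurableSet_Ioi).2 (Eventually.of_forall fun t ht ↦ ?_)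
  rw [Real.norm_eq_abs, abs_mul, abs_of_nonneg (g_nonneg t), abs_of_nonneg (pow_nonneg ht.le k)]
  exact mul_le_mul_of_nonneg_left (g_le_exp t) (pow_nonneg ht.le k)

lemma int_mom (k : ℕ) : Integrable (fun z : ℝ ↦ z ^ k * g z) := by
  have hIic : IntegrableOn (fun z : ℝ ↦ z ^ k * g z) (Iic 0) := by
    rw [← Measure.map_neg_eq_self (volume : Measure ℝ)]
    have m : MeasurableEmbedding fun x : ℝ => -x := (Homeomorph.neg ℝ).measurableEmbedding
    rw [m.integrableOn_map_iff]
    have he : ((fun z : ℝ ↦ z ^ k * g z) ∘ fun x : ℝ ↦ -x)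
        = fun x : ℝ ↦ ((-1 : ℝ)) ^ k * (x ^ k * g x) := by
      funext x
      simp only [Function.comp_apply]
      rw [show -x = -(x) from rfl, g_neg, neg_pow]
      ring
    rw [he]
    have : IntegrableOn (fun x : ℝ ↦ ((-1 : ℝ)) ^ k * (x ^ k * g x)) (Ioi 0) :=
      (intOn_Ioi k).const_mul _
    simp only [neg_preimage, neg_Iic, neg_zero]
    exact (integrableOn_Ici_iff_integrableOn_Ioi).mpr this
  have := hIic.union (intOn_Ioi k)
  rwa [Iic_union_Ioi, integrableOn_univ] at this

lemma integral_pow_exp (k n : ℕ) (hn : 0 < n) :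
    ∫ t in Ioi (0:ℝ), t ^ k * Real.exp (-((n:ℝ) * t))
      = (Nat.factorial k : ℝ) / (n : ℝ) ^ (k + 1) := by
  have h := Real.integral_rpow_mul_exp_neg_mul_Ioi (a := (k : ℝ) + 1) (r := (n : ℝ))
    (by positivity) (by exact_mod_cast hn)
  rw [show ((k : ℝ) + 1 - 1) = (k : ℝ) by ring] at h
  have h2 : ∀ t ∈ Ioi (0:ℝ), t ^ ((k : ℝ)) * Real.exp (-((n:ℝ) * t))
      = t ^ k * Real.exp (-((n:ℝ) * t)) := by
    intro t ht; rw [Real.rpow_natCast]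
  rw [setIntegral_congr_fun measurableSet_Ioi h2] at h
  rw [h, Real.Gamma_nat_eq_factorial,
    show ((k:ℝ) + 1) = ((k + 1 : ℕ) : ℝ) by push_cast; ring, Real.rpow_natCast]
  rw [div_pow, one_pow]
  ring

lemma intOn_exp_n (k n : ℕ) (hn : 0 < n) :
    IntegrableOn (fun t : ℝ ↦ t ^ k * Real.exp (-((n:ℝ) * t))) (Ioi 0) := by
  have hc : Continuous fun t : ℝ ↦ t ^ k * Real.exp (-((n:ℝ) * t)) := by fun_prop
  refine (intB k).mono' hc.aestronglyMeasurable ?_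
  refine (ae_restrict_iff' measurableSet_Ioi).2 (Eventually.of_forall fun t ht ↦ ?_)
  rw [Real.norm_eq_abs, abs_mul, abs_of_nonneg (exp_pos _).le,
    abs_of_nonneg (pow_nonneg ht.le k)]
  refine mul_le_mul_of_nonneg_left (exp_le_exp.2 ?_) (pow_nonneg ht.le k)
  nlinarith [ht.out, (show (1:ℝ) ≤ n by exact_mod_cast hn)]

lemma hasSum_g (t : ℝ) (ht : 0 < t) :
    HasSum (fun n : ℕ ↦ -((n : ℝ) * (-1) ^ n * Real.exp (-((n:ℝ) * t)))) (g t) := by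
  have hr : ‖-Real.exp (-t)‖ < 1 := by
    rw [norm_neg, Real.norm_eq_abs, abs_of_nonneg (exp_pos _).le]
    exact exp_lt_one_iff.2 (by linarith)
  have h := (hasSum_coe_mul_geometric_of_norm_lt_one (r := -Real.exp (-t)) hr).neg
  have hpow : ∀ n : ℕ, (-Real.exp (-t)) ^ n = (-1) ^ n * Real.exp (-((n:ℝ) * t)) := by
    intro n
    rw [neg_pow, ← Real.exp_nat_mul, mul_neg]
  have hfun : (fun n : ℕ ↦ -((n : ℝ) * (-Real.exp (-t)) ^ n))
      = fun n : ℕ ↦ -((n : ℝ) * (-1) ^ n * Real.exp (-((n:ℝ) * t))) := by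
    funext n; rw [hpow]; ring
  have hval : -(-Real.exp (-t) / (1 - -Real.exp (-t)) ^ 2) = g t := by
    unfold g
    rw [show (1 : ℝ) - -Real.exp (-t) = 1 + Real.exp (-t) by ring]
    ring
  rw [hfun, hval] at h
  exact h

lemma bern6 : bernoulli 6 = 1 / 42 := by
  rw [bernoulli_eq_bernoulli'_of_ne_one (by norm_num)]
  have h5 : bernoulli' 5 = 0 := bernoulli'_eq_zero_of_odd (by decide) (by norm_num)
  rw [bernoulli'_def]
  norm_num [Finset.sum_range_succ, h5, Nat.choose]

lemma zeta6 : HasSum (fun n : ℕ ↦ 1 / (n:ℝ) ^ 6) (π ^ 6 / 945) := by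
  have h := hasSum_zeta_nat (k := 3) (by norm_num)
  norm_num [bern6, Nat.factorial] at h
  have : (32 : ℝ) * π ^ 6 * (1 / 42) / 720 = π ^ 6 / 945 := by ring
  rw [this] at h
  convert h using 2
  norm_num

lemma hasSum_alt {k : ℕ} (hk : k ≠ 0) {S : ℝ} (h : HasSum (fun n : ℕ ↦ 1 / (n:ℝ) ^ k) S) :
    HasSum (fun n : ℕ ↦ (-1:ℝ) ^ (n+1) / (n:ℝ) ^ k) (S - S * (2 / 2 ^ k)) := by
  have hinj : Function.Injective (fun m : ℕ ↦ 2 * m) := fun a b hab => by simpa using hab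
  have heven : HasSum (fun n : ℕ ↦ if Even n then 1 / (n:ℝ) ^ k else 0) (S * (1 / 2 ^ k)) := by
    rw [← Function.Injective.hasSum_iff hinj ?_]
    · have h2 : ((fun n : ℕ ↦ if Even n then 1 / (n:ℝ) ^ k else 0) ∘ fun m : ℕ ↦ 2 * m)
          = fun m : ℕ ↦ (1 / 2 ^ k) * (1 / (m:ℝ) ^ k) := by
        funext m
        simp only [Function.comp_apply, if_pos (even_two_mul m)]
        push_cast
        rw [mul_pow, div_mul_div_comm, one_mul]
      rw [h2]
      have := (h.mul_left (1 / 2 ^ k))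
      rw [show S * (1 / 2 ^ k) = 1 / 2 ^ k * S by ring]
      exact this
    · intro n hn
      have hne : ¬ Even n := by
        simp only [Set.mem_range, not_exists] at hn
        rintro ⟨m, hm⟩; exact hn m (by omega)
      simp [hne]
  have hsub := h.sub (heven.mul_left 2)
  have hfun : (fun n : ℕ ↦ 1 / (n:ℝ) ^ k - 2 * (if Even n then 1 / (n:ℝ) ^ k else 0))
      = fun n : ℕ ↦ (-1:ℝ) ^ (n+1) / (n:ℝ) ^ k := by
    funext n
    rcases Nat.even_or_odd n with he | ho
    · rw [if_pos he, Odd.neg_one_pow he.add_one]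
      ring
    · rw [if_neg (by simpa using Nat.not_even_iff_odd.mpr ho), Even.neg_one_pow ho.add_one]
      ring
  rw [hfun] at hsub
  convert hsub using 1
  · rfl
  ring

lemma moment_Ioi (k : ℕ) (hk : 2 ≤ k) :
    HasSum (fun n : ℕ ↦ (Nat.factorial k : ℝ) * ((-1:ℝ) ^ (n+1) / (n:ℝ) ^ k))
      (∫ t in Ioi (0:ℝ), t ^ k * g t) := by
  set F : ℕ → ℝ → ℝ :=
    fun n t ↦ (-((n:ℝ) * (-1) ^ n)) * (t ^ k * Real.exp (-((n:ℝ) * t))) with hF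
  have hInt : ∀ n, Integrable (F n) (volume.restrict (Ioi 0)) := by
    intro n
    rcases Nat.eq_zero_or_pos n with rfl | hn
    · simpa [hF] using (integrable_zero ℝ ℝ (volume.restrict (Ioi (0:ℝ))))
    · exact ((intOn_exp_n k n hn).const_mul _)
  have hnorm : ∀ n : ℕ, (∫ t in Ioi (0:ℝ), ‖F n t‖)
      = (Nat.factorial k : ℝ) * (1 / (n:ℝ) ^ k) := by
    intro n
    rcases Nat.eq_zero_or_pos n with rfl | hn
    · simp [hF, zero_pow (by omega : k ≠ 0)]
    · have hptw : ∀ t ∈ Ioi (0:ℝ), ‖F n t‖ = (n:ℝ) * (t ^ k * Real.exp (-((n:ℝ) * t))) := by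
        intro t ht
        rw [hF]
        simp only [Real.norm_eq_abs, abs_mul]
        rw [abs_neg, abs_mul, abs_pow, abs_neg, abs_one, one_pow, mul_one,
          abs_of_nonneg (pow_nonneg ht.out.le k), abs_of_nonneg (exp_pos _).le,
          Nat.abs_cast]
      rw [setIntegral_congr_fun measurableSet_Ioi hptw, MeasureTheory.integral_const_mul,
        integral_pow_exp k n hn, pow_succ]
      have hn0 : ((n:ℝ)) ≠ 0 := by positivity
      field_simp
  have hsummable : Summable (fun n : ℕ ↦ (Nat.factorial k : ℝ) * (1 / (n:ℝ) ^ k)) :=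
    (Real.summable_one_div_nat_pow.2 hk).mul_left _
  have H := hasSum_integral_of_summable_integral_norm (μ := volume.restrict (Ioi 0))
    hInt (by simpa only [hnorm] using hsummable)
  have h1 : (∫ t in Ioi (0:ℝ), ∑' n, F n t) = ∫ t in Ioi (0:ℝ), t ^ k * g t := by
    refine setIntegral_congr_fun measurableSet_Ioi (fun t ht ↦ ?_)
    have hs := (hasSum_g t ht).mul_left (t ^ k)
    have hfe : (fun n : ℕ ↦ t ^ k * -((n : ℝ) * (-1) ^ n * Real.exp (-((n:ℝ) * t))))
        = fun n ↦ F n t := by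
      funext n; rw [hF]; ring
    rw [hfe] at hs
    exact hs.tsum_eq
  have h2 : (fun n : ℕ ↦ ∫ t in Ioi (0:ℝ), F n t)
      = fun n : ℕ ↦ (Nat.factorial k : ℝ) * ((-1:ℝ) ^ (n+1) / (n:ℝ) ^ k) := by
    funext n
    rcases Nat.eq_zero_or_pos n with rfl | hn
    · simp [hF, zero_pow (by omega : k ≠ 0)]
    · rw [hF]
      simp only
      rw [MeasureTheory.integral_const_mul, integral_pow_exp k n hn, pow_succ, pow_succ]
      have hn0 : ((n:ℝ)) ≠ 0 := by positivity
      field_simp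
  rw [h1, h2] at H
  exact H

lemma int_g_Ioi : ∫ t in Ioi (0:ℝ), g t = 1 / 2 := by
  have hderiv : ∀ x ∈ Ici (0:ℝ), HasDerivAt (fun x : ℝ ↦ (1 + Real.exp (-x))⁻¹) (g x) x := by
    intro x _
    have h2 : HasDerivAt (fun x : ℝ ↦ Real.exp (-x)) (Real.exp (-x) * (-1)) x :=
      (Real.hasDerivAt_exp _).comp x (hasDerivAt_id x).neg
    have h3 : HasDerivAt (fun x : ℝ ↦ 1 + Real.exp (-x)) (Real.exp (-x) * (-1)) x :=
      h2.const_add 1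
    have h4 := h3.inv (by positivity)
    rw [show g x = -(Real.exp (-x) * (-1)) / (1 + Real.exp (-x)) ^ 2 by unfold g; ring]
    exact h4
  have hint : IntegrableOn g (Ioi 0) := by
    have := intOn_Ioi 0
    simpa using this
  have htend : Tendsto (fun x : ℝ ↦ (1 + Real.exp (-x))⁻¹) atTop (𝓝 1) := by
    have h0 : Tendsto (fun x : ℝ ↦ Real.exp (-x)) atTop (𝓝 0) :=
      Real.tendsto_exp_atBot.comp tendsto_neg_atTop_atBot
    have := (tendsto_const_nhds.add h0).inv₀ (by norm_num : (1:ℝ) + 0 ≠ 0)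
    simpa using this
  have := integral_Ioi_of_hasDerivAt_of_tendsto' hderiv hint htend
  rw [this]
  norm_num

lemma mom_even (k : ℕ) (hk : Even k) :
    ∫ z : ℝ, z ^ k * g z = 2 * ∫ t in Ioi (0:ℝ), t ^ k * g t := by
  have hfe : (fun z : ℝ ↦ z ^ k * g z) = fun z : ℝ ↦ |z| ^ k * g |z| := by
    funext z
    rcases le_or_gt 0 z with h | h
    · rw [abs_of_nonneg h]
    · rw [abs_of_neg h, g_neg, hk.neg_pow]
  conv_lhs => rw [hfe]
  exact integral_comp_abs (f := fun t : ℝ ↦ t ^ k * g t)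

lemma mom_odd (k : ℕ) (hk : Odd k) : ∫ z : ℝ, z ^ k * g z = 0 := by
  have h := integral_comp_neg_Iic (0:ℝ) (fun x : ℝ ↦ (-x) ^ k * g (-x))
  simp only [neg_neg, neg_zero] at h
  have h2 : ∫ x in Ioi (0:ℝ), (-x) ^ k * g (-x) = -∫ x in Ioi (0:ℝ), x ^ k * g x := by
    rw [← MeasureTheory.integral_neg]
    refine setIntegral_congr_fun measurableSet_Ioi (fun x _ ↦ ?_)
    rw [g_neg, hk.neg_pow]
    ring
  rw [h2] at h
  have hIic : IntegrableOn (fun z : ℝ ↦ z ^ k * g z) (Iic 0) := (int_mom k).integrableOn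
  have hsplit : ∫ z : ℝ, z ^ k * g z
      = (∫ z in Iic (0:ℝ), z ^ k * g z) + ∫ z in Ioi (0:ℝ), z ^ k * g z := by
    rw [← setIntegral_union (Iic_disjoint_Ioi le_rfl) measurableSet_Ioi hIic (intOn_Ioi k),
      Iic_union_Ioi, setIntegral_univ]
  rw [hsplit, h]
  ring

lemma I_val (k : ℕ) (hk : 2 ≤ k) {S : ℝ} (hz : HasSum (fun n : ℕ ↦ 1 / (n:ℝ) ^ k) S) :
    ∫ t in Ioi (0:ℝ), t ^ k * g t = (Nat.factorial k : ℝ) * (S - S * (2 / 2 ^ k)) :=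
  (moment_Ioi k hk).unique ((hasSum_alt (by omega) hz).mul_left _)

lemma M0 : ∫ z : ℝ, z ^ 0 * g z = 1 := by
  rw [mom_even 0 Even.zero]
  have : ∫ t in Ioi (0:ℝ), t ^ 0 * g t = ∫ t in Ioi (0:ℝ), g t := by
    refine setIntegral_congr_fun measurableSet_Ioi (fun t _ ↦ ?_); rw [pow_zero, one_mul]
  rw [this, int_g_Ioi]; norm_num

lemma M2 : ∫ z : ℝ, z ^ 2 * g z = π ^ 2 / 3 := by
  rw [mom_even 2 even_two, I_val 2 le_rfl hasSum_zeta_two]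
  norm_num [Nat.factorial]; ring

lemma M4 : ∫ z : ℝ, z ^ 4 * g z = 7 * π ^ 4 / 15 := by
  rw [mom_even 4 (by decide), I_val 4 (by norm_num) hasSum_zeta_four]
  norm_num [Nat.factorial]; ring

lemma M6 : ∫ z : ℝ, z ^ 6 * g z = 31 * π ^ 6 / 21 := by
  rw [mom_even 6 (by decide), I_val 6 (by norm_num) zeta6]
  norm_num [Nat.factorial]; ring

theorem stmt0 (α β : ℝ) : ∫ z : ℝ, f z α β = 1 := by
  have hC : (0:ℝ) < C α β := by
    have key : (0:ℝ) ≤ 7 * π ^ 2 * (5 * α + 7 * π ^ 2 * β) ^ 2 + 432 * π ^ 6 * β ^ 2 := by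
      positivity
    unfold C
    nlinarith [key]
  have key : ∀ (c : ℝ) (k : ℕ), Integrable (fun z : ℝ ↦ c * (z ^ k * g z)) :=
    fun c k ↦ (int_mom k).const_mul c
  have hsum : (fun z : ℝ ↦ f z α β) = fun z : ℝ ↦
      (2 / C α β) * (z ^ 0 * g z) + ((-2 * α) / C α β) * (z ^ 1 * g z)
      + (α ^ 2 / C α β) * (z ^ 2 * g z) + ((-2 * β) / C α β) * (z ^ 3 * g z)
      + ((2 * α * β) / C α β) * (z ^ 4 * g z) + (β ^ 2 / C α β) * (z ^ 6 * g z) := by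
    funext z
    unfold f
    ring
  rw [hsum]
  have i1 := key (2 / C α β) 0
  have i2 := key ((-2 * α) / C α β) 1
  have i3 := key (α ^ 2 / C α β) 2
  have i4 := key ((-2 * β) / C α β) 3
  have i5 := key ((2 * α * β) / C α β) 4
  have i6 := key (β ^ 2 / C α β) 6
  have i12 : Integrable (fun z : ℝ ↦ 2 / C α β * (z ^ 0 * g z)
      + (-2 * α) / C α β * (z ^ 1 * g z)) := i1.add i2
  have i123 : Integrable (fun z : ℝ ↦ 2 / C α β * (z ^ 0 * g z)
      + (-2 * α) / C α β * (z ^ 1 * g z) + α ^ 2 / C α β * (z ^ 2 * g z)) := i12.add i3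
  have i1234 : Integrable (fun z : ℝ ↦ 2 / C α β * (z ^ 0 * g z)
      + (-2 * α) / C α β * (z ^ 1 * g z) + α ^ 2 / C α β * (z ^ 2 * g z)
      + (-2 * β) / C α β * (z ^ 3 * g z)) := i123.add i4
  have i12345 : Integrable (fun z : ℝ ↦ 2 / C α β * (z ^ 0 * g z)
      + (-2 * α) / C α β * (z ^ 1 * g z) + α ^ 2 / C α β * (z ^ 2 * g z)
      + (-2 * β) / C α β * (z ^ 3 * g z) + (2 * α * β) / C α β * (z ^ 4 * g z)) := i1234.add i5
  rw [integral_add i12345 i6, integral_add i1234 i5, integral_add i123 i4,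
    integral_add i12 i3, integral_add i1 i2]
  simp only [MeasureTheory.integral_const_mul]
  rw [M0, M2, M4, M6, mom_odd 1 odd_one, mom_odd 3 (by decide)]
  have hne : C α β ≠ 0 := ne_of_gt hC
  field_simp
  unfold C
  field_simp
  ring
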